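/- Let q ∈ K. The pairing ⟨−,−⟩_q on plane posets, defined by ⟨P,Q⟩_q = q^{φ(P,Q)} if ι(P) ≤ Q and 0 otherwise, is symmetric (⟨P,Q⟩_q = ⟨Q,P⟩_q for all plane posets P, Q), and it satisfies the Hopf compatibility with the composition product and the coproduct Δ_q: for all plane posets P, Q, R, ⟨PQ, R⟩_q = Σ over biideals I of R of q^{h_{R∖I}^{I}} ⟨P, R∖I⟩_q ⟨Q, I⟩_q. -/

import Mathlib

open scoped TensorProduct
open scoped Classical

noncomputable section

/-- A plane poset structure on a set `α`: two partial orders `≤_h` (`hle`) and `≤_r` (`rle`)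
such that two distinct elements are comparable for `≤_h` if and only if they are not
comparable for `≤_r`. -/
structure PlanePoset (α : Type) where
  hle : α → α → Prop
  rle : α → α → Prop
  hle_refl : ∀ x, hle x x
  hle_antisymm : ∀ x y, hle x y → hle y x → x = y
  hle_trans : ∀ x y z, hle x y → hle y z → hle x z
  rle_refl : ∀ x, rle x x
  rle_antisymm : ∀ x y, rle x y → rle y x → x = y
  rle_trans : ∀ x y z, rle x y → rle y z → rle x z
  compat : ∀ x y, x ≠ y → ((hle x y ∨ hle y x) ↔ ¬ (rle x y ∨ rle y x))

namespace PlanePoset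

variable {α β : Type}

/-- The induced (total) order `x ≤ y iff x ≤_h y or x ≤_r y`. -/
def tle (P : PlanePoset α) (x y : α) : Prop := P.hle x y ∨ P.rle x y

/-- Transport of a plane poset structure along a bijection. -/
def map (e : α ≃ β) (P : PlanePoset α) : PlanePoset β where
  hle x y := P.hle (e.symm x) (e.symm y)
  rle x y := P.rle (e.symm x) (e.symm y)
  hle_refl x := P.hle_refl _
  hle_antisymm x y h1 h2 := e.symm.injective (P.hle_antisymm _ _ h1 h2)
  hle_trans x y z h1 h2 := P.hle_trans _ _ _ h1 h2
  rle_refl x := P.rle_refl _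
  rle_antisymm x y h1 h2 := e.symm.injective (P.rle_antisymm _ _ h1 h2)
  rle_trans x y z h1 h2 := P.rle_trans _ _ _ h1 h2
  compat x y hxy := P.compat _ _ fun h => hxy (e.symm.injective h)

@[simp] theorem map_hle (e : α ≃ β) (P : PlanePoset α) (x y : β) :
    (P.map e).hle x y ↔ P.hle (e.symm x) (e.symm y) := Iff.rfl

@[simp] theorem map_rle (e : α ≃ β) (P : PlanePoset α) (x y : β) :
    (P.map e).rle x y ↔ P.rle (e.symm x) (e.symm y) := Iff.rfl

/-- The composition `PQ` of two plane posets: `x ≤_r y` for every `x ∈ P`, `y ∈ Q`. -/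
def comp (P : PlanePoset α) (Q : PlanePoset β) : PlanePoset (α ⊕ β) where
  hle x y :=
    match x, y with
    | Sum.inl a, Sum.inl b => P.hle a b
    | Sum.inr a, Sum.inr b => Q.hle a b
    | _, _ => False
  rle x y :=
    match x, y with
    | Sum.inl a, Sum.inl b => P.rle a b
    | Sum.inr a, Sum.inr b => Q.rle a b
    | Sum.inl _, Sum.inr _ => True
    | Sum.inr _, Sum.inl _ => False
  hle_refl := by
    rintro (a | a)
    · exact P.hle_refl a
    · exact Q.hle_refl a
  hle_antisymm := by
    rintro (a | a) (b | b) h1 h2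
    · exact congrArg Sum.inl (P.hle_antisymm a b h1 h2)
    · exact h1.elim
    · exact h1.elim
    · exact congrArg Sum.inr (Q.hle_antisymm a b h1 h2)
  hle_trans := by
    rintro (a | a) (b | b) (c | c) h1 h2 <;>
      first
        | exact P.hle_trans _ _ _ h1 h2
        | exact Q.hle_trans _ _ _ h1 h2
        | exact h1.elim
        | exact h2.elim
  rle_refl := by
    rintro (a | a)
    · exact P.rle_refl a
    · exact Q.rle_refl a
  rle_antisymm := by
    rintro (a | a) (b | b) h1 h2
    · exact congrArg Sum.inl (P.rle_antisymm a b h1 h2)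
    · exact h2.elim
    · exact h1.elim
    · exact congrArg Sum.inr (Q.rle_antisymm a b h1 h2)
  rle_trans := by
    rintro (a | a) (b | b) (c | c) h1 h2 <;>
      first
        | exact P.rle_trans _ _ _ h1 h2
        | exact Q.rle_trans _ _ _ h1 h2
        | exact h1.elim
        | exact h2.elim
        | trivial
  compat := by
    rintro (a | a) (b | b) hne
    · exact P.compat a b fun h => hne (congrArg Sum.inl h)
    · show (False ∨ False) ↔ ¬ (True ∨ False)
      simp
    · show (False ∨ False) ↔ ¬ (False ∨ True)
      simp
    · exact Q.compat a b fun h => hne (congrArg Sum.inr h)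

/-- The product `P ▷ Q` of two plane posets: `x ≤_h y` for every `x ∈ P`, `y ∈ Q`. -/
def hcomp (P : PlanePoset α) (Q : PlanePoset β) : PlanePoset (α ⊕ β) where
  hle x y :=
    match x, y with
    | Sum.inl a, Sum.inl b => P.hle a b
    | Sum.inr a, Sum.inr b => Q.hle a b
    | Sum.inl _, Sum.inr _ => True
    | Sum.inr _, Sum.inl _ => False
  rle x y :=
    match x, y with
    | Sum.inl a, Sum.inl b => P.rle a b
    | Sum.inr a, Sum.inr b => Q.rle a b
    | _, _ => False
  hle_refl := by
    rintro (a | a)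
    · exact P.hle_refl a
    · exact Q.hle_refl a
  hle_antisymm := by
    rintro (a | a) (b | b) h1 h2
    · exact congrArg Sum.inl (P.hle_antisymm a b h1 h2)
    · exact h2.elim
    · exact h1.elim
    · exact congrArg Sum.inr (Q.hle_antisymm a b h1 h2)
  hle_trans := by
    rintro (a | a) (b | b) (c | c) h1 h2 <;>
      first
        | exact P.hle_trans _ _ _ h1 h2
        | exact Q.hle_trans _ _ _ h1 h2
        | exact h1.elim
        | exact h2.elim
        | trivial
  rle_refl := by
    rintro (a | a)
    · exact P.rle_refl a
    · exact Q.rle_refl a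
  rle_antisymm := by
    rintro (a | a) (b | b) h1 h2
    · exact congrArg Sum.inl (P.rle_antisymm a b h1 h2)
    · exact h1.elim
    · exact h1.elim
    · exact congrArg Sum.inr (Q.rle_antisymm a b h1 h2)
  rle_trans := by
    rintro (a | a) (b | b) (c | c) h1 h2 <;>
      first
        | exact P.rle_trans _ _ _ h1 h2
        | exact Q.rle_trans _ _ _ h1 h2
        | exact h1.elim
        | exact h2.elim
  compat := by
    rintro (a | a) (b | b) hne
    · exact P.compat a b fun h => hne (congrArg Sum.inl h)
    · show (True ∨ False) ↔ ¬ (False ∨ False)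
      simp
    · show (False ∨ True) ↔ ¬ (False ∨ False)
      simp
    · exact Q.compat a b fun h => hne (congrArg Sum.inr h)

/-- Restriction of a plane poset to a subset (a plane subposet). -/
def res (P : PlanePoset α) (s : Finset α) : PlanePoset {x : α // x ∈ s} where
  hle x y := P.hle x.1 y.1
  rle x y := P.rle x.1 y.1
  hle_refl x := P.hle_refl _
  hle_antisymm x y h1 h2 := Subtype.ext (P.hle_antisymm _ _ h1 h2)
  hle_trans x y z h1 h2 := P.hle_trans _ _ _ h1 h2
  rle_refl x := P.rle_refl _
  rle_antisymm x y h1 h2 := Subtype.ext (P.rle_antisymm _ _ h1 h2)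
  rle_trans x y z h1 h2 := P.rle_trans _ _ _ h1 h2
  compat x y hxy := P.compat _ _ fun h => hxy (Subtype.ext h)

/-- The involution `ι` exchanging the two partial orders. -/
def swap (P : PlanePoset α) : PlanePoset α where
  hle := P.rle
  rle := P.hle
  hle_refl := P.rle_refl
  hle_antisymm := P.rle_antisymm
  hle_trans := P.rle_trans
  rle_refl := P.hle_refl
  rle_antisymm := P.hle_antisymm
  rle_trans := P.hle_trans
  compat x y hxy := by
    have h := P.compat x y hxy
    tauto

end PlanePoset

/-- A plane poset structure on `Fin n` is canonical when the induced total order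
is the usual order on `{1, …, n}`. -/
def IsCanon {n : ℕ} (P : PlanePoset (Fin n)) : Prop :=
  ∀ x y : Fin n, (P.hle x y ∨ P.rle x y) ↔ x ≤ y

/-- `PP(n)`: (isoclasses of) plane posets of cardinality `n`, realized as the canonical
plane poset structures on `{1, …, n}`. -/
def CanonPP (n : ℕ) : Type := { P : PlanePoset (Fin n) // IsCanon P }

namespace CanonPP

/-- The empty plane poset, unit of both products. -/
def one : CanonPP 0 :=
  ⟨{ hle := fun _ _ => True
     rle := fun _ _ => True
     hle_refl := fun _ => trivial
     hle_antisymm := fun x => x.elim0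
     hle_trans := fun _ _ _ _ _ => trivial
     rle_refl := fun _ => trivial
     rle_antisymm := fun x => x.elim0
     rle_trans := fun _ _ _ _ _ => trivial
     compat := fun x => x.elim0 }, fun x => x.elim0⟩

/-- The composition `PQ` of plane posets, realized canonically. -/
def comp {k l : ℕ} (P : CanonPP k) (Q : CanonPP l) : CanonPP (k + l) :=
  ⟨(P.1.comp Q.1).map finSumFinEquiv, by
    intro x y
    obtain ⟨a, rfl⟩ := finSumFinEquiv.surjective x
    obtain ⟨b, rfl⟩ := finSumFinEquiv.surjective y
    simp only [PlanePoset.map_hle, PlanePoset.map_rle, Equiv.symm_apply_apply]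
    rcases a with a | a <;> rcases b with b | b
    · show (P.1.hle a b ∨ P.1.rle a b) ↔ _
      rw [P.2 a b, finSumFinEquiv_apply_left, finSumFinEquiv_apply_left]
      simp only [Fin.le_def, Fin.coe_castAdd]
      try omega
    · show (False ∨ True) ↔ _
      rw [finSumFinEquiv_apply_left, finSumFinEquiv_apply_right]
      have ha := a.isLt
      simp only [false_or, true_iff, Fin.le_def, Fin.coe_castAdd, Fin.coe_natAdd]
      omega
    · show (False ∨ False) ↔ _
      rw [finSumFinEquiv_apply_right, finSumFinEquiv_apply_left]
      have hb := b.isLt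
      simp only [or_self, false_iff, Fin.le_def, Fin.coe_natAdd, Fin.coe_castAdd]
      omega
    · show (Q.1.hle a b ∨ Q.1.rle a b) ↔ _
      rw [Q.2 a b, finSumFinEquiv_apply_right, finSumFinEquiv_apply_right]
      simp only [Fin.le_def, Fin.coe_natAdd]
      omega⟩

/-- The product `P ▷ Q` of plane posets, realized canonically. -/
def hcomp {k l : ℕ} (P : CanonPP k) (Q : CanonPP l) : CanonPP (k + l) :=
  ⟨(P.1.hcomp Q.1).map finSumFinEquiv, by
    intro x y
    obtain ⟨a, rfl⟩ := finSumFinEquiv.surjective x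
    obtain ⟨b, rfl⟩ := finSumFinEquiv.surjective y
    simp only [PlanePoset.map_hle, PlanePoset.map_rle, Equiv.symm_apply_apply]
    rcases a with a | a <;> rcases b with b | b
    · show (P.1.hle a b ∨ P.1.rle a b) ↔ _
      rw [P.2 a b, finSumFinEquiv_apply_left, finSumFinEquiv_apply_left]
      simp only [Fin.le_def, Fin.coe_castAdd]
      try omega
    · show (True ∨ False) ↔ _
      rw [finSumFinEquiv_apply_left, finSumFinEquiv_apply_right]
      have ha := a.isLt
      simp only [or_false, true_iff, Fin.le_def, Fin.coe_castAdd, Fin.coe_natAdd]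
      omega
    · show (False ∨ False) ↔ _
      rw [finSumFinEquiv_apply_right, finSumFinEquiv_apply_left]
      have hb := b.isLt
      simp only [or_self, false_iff, Fin.le_def, Fin.coe_natAdd, Fin.coe_castAdd]
      omega
    · show (Q.1.hle a b ∨ Q.1.rle a b) ↔ _
      rw [Q.2 a b, finSumFinEquiv_apply_right, finSumFinEquiv_apply_right]
      simp only [Fin.le_def, Fin.coe_natAdd]
      omega⟩

/-- Restriction of a plane poset to a plane subposet, realized canonically via the unique
increasing bijection. -/
def restrict {n : ℕ} (P : CanonPP n) (s : Finset (Fin n)) : CanonPP s.card :=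
  ⟨(P.1.res s).map (s.orderIsoOfFin rfl).toEquiv.symm, by
    intro i j
    simp only [PlanePoset.map_hle, PlanePoset.map_rle, Equiv.symm_symm]
    show (P.1.hle ((s.orderIsoOfFin rfl).toEquiv i).1 ((s.orderIsoOfFin rfl).toEquiv j).1 ∨
          P.1.rle ((s.orderIsoOfFin rfl).toEquiv i).1 ((s.orderIsoOfFin rfl).toEquiv j).1) ↔ i ≤ j
    rw [P.2]
    rw [Subtype.coe_le_coe]
    exact (s.orderIsoOfFin rfl).le_iff_le⟩

/-- The involution `ι`, on canonical plane posets. -/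
def iota {n : ℕ} (P : CanonPP n) : CanonPP n :=
  ⟨P.1.swap, fun x y => by rw [or_comm]; exact P.2 x y⟩

end CanonPP

/-- The partial (weak Bruhat) order on `PP(n)`: `P ≤ Q` iff `x ≤_h y` in `Q` implies
`x ≤_h y` in `P` (the increasing bijection between canonical representatives being
the identity). -/
def PPle {n : ℕ} (P Q : CanonPP n) : Prop :=
  ∀ x y : Fin n, Q.1.hle x y → P.1.hle x y

/-- Strict version of the order on `PP(n)`. -/
def PPlt {n : ℕ} (P Q : CanonPP n) : Prop := PPle P Q ∧ P ≠ Q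

/-- Covering relation of the poset `(PP(n), ≤)`. -/
def PPcovBy {n : ℕ} (P Q : CanonPP n) : Prop :=
  PPlt P Q ∧ ∀ T : CanonPP n, PPlt P T → ¬ PPlt T Q

/-- `E(P) = {(i,j) | i <_h j}`. -/
def Eset {n : ℕ} (P : CanonPP n) : Set (Fin n × Fin n) :=
  {p | P.1.hle p.1 p.2 ∧ p.1 ≠ p.2}

/-- A biideal of a plane poset: an ideal for both partial orders, equivalently an ideal
for the induced total order. -/
def IsBiideal {n : ℕ} (P : CanonPP n) (I : Finset (Fin n)) : Prop :=
  ∀ x y : Fin n, x ∈ I → (P.1.hle x y ∨ P.1.rle x y) → y ∈ I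

/-- `h_s^t = #{(x,y) ∈ s × t | x <_h y}`. -/
def hNum {n : ℕ} (P : CanonPP n) (s t : Finset (Fin n)) : ℕ :=
  ((s ×ˢ t).filter (fun p : Fin n × Fin n => P.1.hle p.1 p.2 ∧ p.1 ≠ p.2)).card

/-- `φ(P,Q) = #{(x,y) | x <_r y in P and x <_h y in Q} + #{(x,y) | x <_h y in P and
x <_r y in Q}` (via the identity increasing bijection). -/
def phi {n : ℕ} (P Q : CanonPP n) : ℕ :=
  (Finset.univ.filter (fun p : Fin n × Fin n =>
      (P.1.rle p.1 p.2 ∧ p.1 ≠ p.2) ∧ (Q.1.hle p.1 p.2 ∧ p.1 ≠ p.2))).card +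
  (Finset.univ.filter (fun p : Fin n × Fin n =>
      (P.1.hle p.1 p.2 ∧ p.1 ≠ p.2) ∧ (Q.1.rle p.1 p.2 ∧ p.1 ≠ p.2))).card

/-- The level `ℓ(P) = #{(x,y) | x <_r y}`. -/
def level {n : ℕ} (P : CanonPP n) : ℕ :=
  (Finset.univ.filter (fun p : Fin n × Fin n => P.1.rle p.1 p.2 ∧ p.1 ≠ p.2)).card

/-- The plane poset `P_σ = Ψ_n(σ)` associated to a permutation `σ`. -/
def PsiPerm {n : ℕ} (σ : Equiv.Perm (Fin n)) : CanonPP n :=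
  ⟨{ hle := fun i j => i ≤ j ∧ σ.symm i ≤ σ.symm j
     rle := fun i j => i ≤ j ∧ σ.symm j ≤ σ.symm i
     hle_refl := fun x => ⟨le_refl x, le_refl _⟩
     hle_antisymm := fun x y h1 h2 => le_antisymm h1.1 h2.1
     hle_trans := fun x y z h1 h2 => ⟨le_trans h1.1 h2.1, le_trans h1.2 h2.2⟩
     rle_refl := fun x => ⟨le_refl x, le_refl _⟩
     rle_antisymm := fun x y h1 h2 => le_antisymm h1.1 h2.1
     rle_trans := fun x y z h1 h2 => ⟨le_trans h1.1 h2.1, le_trans h2.2 h1.2⟩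
     compat := by
       intro x y hxy
       have h1 : (x : ℕ) ≠ (y : ℕ) := fun h => hxy (Fin.ext h)
       have h2 : ((σ.symm x : Fin n) : ℕ) ≠ ((σ.symm y : Fin n) : ℕ) :=
         fun h => hxy (σ.symm.injective (Fin.ext h))
       simp only [Fin.le_def]
       omega },
   by
     intro x y
     show ((x ≤ y ∧ σ.symm x ≤ σ.symm y) ∨ (x ≤ y ∧ σ.symm y ≤ σ.symm x)) ↔ x ≤ y
     simp only [Fin.le_def]
     omega⟩

/-- One step of the weak Bruhat order: exchange two consecutive letters `i < j`
(`i` appearing immediately before `j`) in the word `σ(1) ⋯ σ(n)`. -/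
def bruhatStep {n : ℕ} (σ τ : Equiv.Perm (Fin n)) : Prop :=
  ∃ (i j k : Fin n) (hk : (k : ℕ) + 1 < n),
    i < j ∧ σ k = i ∧ σ ⟨(k : ℕ) + 1, hk⟩ = j ∧ τ = Equiv.swap i j * σ

/-- The set of (isoclasses of) plane posets. -/
abbrev PPS : Type := Σ n : ℕ, CanonPP n

/-- Composition product on plane posets. -/
def PPS.comp (P Q : PPS) : PPS := ⟨P.1 + Q.1, P.2.comp Q.2⟩

/-- The product `▷` on plane posets. -/
def PPS.hcomp (P Q : PPS) : PPS := ⟨P.1 + Q.1, P.2.hcomp Q.2⟩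

/-- Value of the coproduct `Δ_q` on a plane poset:
`Δ_q(P) = Σ_{I biideal of P} q^{h_{P∖I}^I} (P∖I) ⊗ I`. -/
def deltaOn (K : Type) [Field K] (q : K) {n : ℕ} (P : CanonPP n) :
    (PPS →₀ K) ⊗[K] (PPS →₀ K) :=
  ∑ I ∈ Finset.univ.filter (fun I : Finset (Fin n) => IsBiideal P I),
    q ^ hNum P Iᶜ I •
      (Finsupp.single (⟨Iᶜ.card, P.restrict Iᶜ⟩ : PPS) (1 : K) ⊗ₜ[K]
        Finsupp.single (⟨I.card, P.restrict I⟩ : PPS) (1 : K))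

/-- The coproduct `Δ_q` on `h_PP`, extended linearly. -/
def Delta (K : Type) [Field K] (q : K) :
    (PPS →₀ K) →ₗ[K] (PPS →₀ K) ⊗[K] (PPS →₀ K) :=
  Finsupp.lift _ K PPS fun P => deltaOn K q P.2

/-- The composition product `m`, extended bilinearly to `h_PP`. -/
def mulPP (K : Type) [Field K] : (PPS →₀ K) →ₗ[K] (PPS →₀ K) →ₗ[K] (PPS →₀ K) :=
  Finsupp.lift _ K PPS fun P =>
    Finsupp.lift _ K PPS fun Q => Finsupp.single (PPS.comp P Q) 1

/-- The componentwise product on `h_PP ⊗ h_PP`. -/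
def mulT (K : Type) [Field K] :
    ((PPS →₀ K) ⊗[K] (PPS →₀ K)) →ₗ[K] ((PPS →₀ K) ⊗[K] (PPS →₀ K)) →ₗ[K]
      ((PPS →₀ K) ⊗[K] (PPS →₀ K)) :=
  TensorProduct.map₂ (mulPP K) (mulPP K)

/-- Multiplication of the basis element of a plane poset by `q^{n·c}` where `n` is its
cardinality. -/
def scale (K : Type) [Field K] (q : K) (c : ℕ) : (PPS →₀ K) →ₗ[K] (PPS →₀ K) :=
  Finsupp.lift _ K PPS fun P => q ^ (P.1 * c) • Finsupp.single P 1

/-- Right multiplication by a plane poset for the product `▷`. -/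
def rmulH (K : Type) [Field K] (Q : PPS) : (PPS →₀ K) →ₗ[K] (PPS →₀ K) :=
  Finsupp.lift _ K PPS fun P => Finsupp.single (PPS.hcomp P Q) 1

/-- Left multiplication by a plane poset for the product `▷`. -/
def lmulH (K : Type) [Field K] (P : PPS) : (PPS →₀ K) →ₗ[K] (PPS →₀ K) :=
  Finsupp.lift _ K PPS fun Q => Finsupp.single (PPS.hcomp P Q) 1

/-- The pairing on plane posets of the same cardinality:
`⟨P,Q⟩_q = q^{φ(P,Q)}` if `ι(P) ≤ Q`, and `0` otherwise. -/
def pairN (K : Type) [Field K] (q : K) {n : ℕ} (P Q : CanonPP n) : K :=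
  if PPle (CanonPP.iota P) Q then q ^ phi P Q else 0

/-- The pairing `⟨-,-⟩_q` on plane posets (zero on posets of different cardinalities). -/
def pairPP (K : Type) [Field K] (q : K) (P Q : PPS) : K :=
  if h : P.1 = Q.1 then pairN K q (cast (congrArg CanonPP h) P.2) Q.2 else 0

/-- The pairing `⟨-,-⟩_q`, extended bilinearly to `h_PP`. -/
def Bform (K : Type) [Field K] (q : K) : (PPS →₀ K) →ₗ[K] (PPS →₀ K) →ₗ[K] K :=
  Finsupp.lift _ K PPS fun P => Finsupp.lift K K PPS fun Q => pairPP K q P Q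

end

section Aux

open Finset

-- basic facts about canonical plane posets
theorem hle_le {n : ℕ} (P : CanonPP n) {x y : Fin n} (h : P.1.hle x y) : x ≤ y :=
  (P.2 x y).1 (Or.inl h)

theorem rle_le {n : ℕ} (P : CanonPP n) {x y : Fin n} (h : P.1.rle x y) : x ≤ y :=
  (P.2 x y).1 (Or.inr h)

theorem hle_or_rle {n : ℕ} (P : CanonPP n) {x y : Fin n} (h : x ≤ y) :
    P.1.hle x y ∨ P.1.rle x y := (P.2 x y).2 h

theorem not_both {n : ℕ} (P : CanonPP n) {x y : Fin n} (hne : x ≠ y) :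
    ¬ (P.1.hle x y ∧ P.1.rle x y) := by
  rintro ⟨h1, h2⟩
  exact (P.1.compat x y hne).1 (Or.inl h1) (Or.inl h2)

theorem PPle_iota_swap {n : ℕ} (P Q : CanonPP n) (h : PPle (CanonPP.iota P) Q) :
    PPle (CanonPP.iota Q) P := by
  intro x y hh
  show Q.1.rle x y
  by_cases hxy : x = y
  · subst hxy; exact Q.1.rle_refl x
  · rcases hle_or_rle Q (hle_le P hh) with h1 | h1
    · exact absurd ⟨hh, h x y h1⟩ (not_both P hxy)
    · exact h1

theorem phi_comm {n : ℕ} (P Q : CanonPP n) : phi P Q = phi Q P := by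
  rw [phi, phi, add_comm]
  congr 1 <;> · congr 1; ext p; simp only [Finset.mem_filter]; tauto

variable (K : Type) [Field K] (q : K)

theorem pairN_comm {n : ℕ} (P Q : CanonPP n) : pairN K q P Q = pairN K q Q P := by
  rw [pairN, pairN, phi_comm]
  exact if_congr ⟨PPle_iota_swap P Q, PPle_iota_swap Q P⟩ rfl rfl

theorem pairPP_mk {a : ℕ} (P Q : CanonPP a) :
    pairPP K q ⟨a, P⟩ ⟨a, Q⟩ = pairN K q P Q := by
  simp [pairPP]

theorem pairPP_ne {a b : ℕ} (h : a ≠ b) (P : CanonPP a) (Q : CanonPP b) :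
    pairPP K q ⟨a, P⟩ ⟨b, Q⟩ = 0 := dif_neg h

theorem pairPP_cast {a b : ℕ} (h : a = b) (P : CanonPP a) (S : CanonPP b) :
    pairPP K q ⟨a, P⟩ ⟨b, S⟩ = pairN K q (cast (congrArg CanonPP h) P) S := by
  subst h; rw [pairPP_mk]; rfl

theorem pair_symm (P Q : PPS) : pairPP K q P Q = pairPP K q Q P := by
  obtain ⟨a, P⟩ := P; obtain ⟨b, Q⟩ := Q
  by_cases h : a = b
  · subst h; rw [pairPP_mk, pairPP_mk, pairN_comm]
  · rw [pairPP_ne K q h, pairPP_ne K q (Ne.symm h)]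

end Aux
section Aux2

open Finset

variable {k l : ℕ}

theorem cA_ne_nA (a : Fin k) (b : Fin l) : Fin.castAdd l a ≠ Fin.natAdd k b := by
  have := a.isLt
  simp only [ne_eq, Fin.ext_iff, Fin.coe_castAdd, Fin.coe_natAdd]
  omega

theorem nA_ne_cA (b : Fin l) (a : Fin k) : Fin.natAdd k b ≠ Fin.castAdd l a :=
  (cA_ne_nA a b).symm

theorem not_nA_le_cA (b : Fin l) (a : Fin k) : ¬ (Fin.natAdd k b ≤ Fin.castAdd l a) := by
  have := a.isLt
  simp only [Fin.le_def, Fin.coe_castAdd, Fin.coe_natAdd]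
  omega

theorem cA_ne_iff (a b : Fin k) : Fin.castAdd l a ≠ Fin.castAdd l b ↔ a ≠ b := by
  simp [Fin.ext_iff]

theorem nA_ne_iff (a b : Fin l) : Fin.natAdd k a ≠ Fin.natAdd k b ↔ a ≠ b := by
  simp [Fin.ext_iff]

theorem fin_addCases (x : Fin (k + l)) :
    (∃ a : Fin k, x = Fin.castAdd l a) ∨ ∃ b : Fin l, x = Fin.natAdd k b := by
  rcases lt_or_ge (x : ℕ) k with h | h
  · exact Or.inl ⟨⟨x, h⟩, by ext; rfl⟩
  · refine Or.inr ⟨⟨(x : ℕ) - k, by have := x.isLt; omega⟩, by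
      ext; simp only [Fin.coe_natAdd]; omega⟩

-- evaluation of the composition
theorem comp_rle_ll (P : CanonPP k) (Q : CanonPP l) (a b : Fin k) :
    (P.comp Q).1.rle (Fin.castAdd l a) (Fin.castAdd l b) ↔ P.1.rle a b := by
  show (P.1.comp Q.1).rle (finSumFinEquiv.symm _) (finSumFinEquiv.symm _) ↔ _
  rw [finSumFinEquiv_symm_apply_castAdd, finSumFinEquiv_symm_apply_castAdd]
  rfl

theorem comp_rle_rr (P : CanonPP k) (Q : CanonPP l) (a b : Fin l) :
    (P.comp Q).1.rle (Fin.natAdd k a) (Fin.natAdd k b) ↔ Q.1.rle a b := by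
  show (P.1.comp Q.1).rle (finSumFinEquiv.symm _) (finSumFinEquiv.symm _) ↔ _
  rw [finSumFinEquiv_symm_apply_natAdd, finSumFinEquiv_symm_apply_natAdd]
  rfl

theorem comp_rle_lr (P : CanonPP k) (Q : CanonPP l) (a : Fin k) (b : Fin l) :
    (P.comp Q).1.rle (Fin.castAdd l a) (Fin.natAdd k b) := by
  show (P.1.comp Q.1).rle (finSumFinEquiv.symm _) (finSumFinEquiv.symm _)
  rw [finSumFinEquiv_symm_apply_castAdd, finSumFinEquiv_symm_apply_natAdd]
  trivial

theorem comp_rle_rl (P : CanonPP k) (Q : CanonPP l) (b : Fin l) (a : Fin k) :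
    ¬ (P.comp Q).1.rle (Fin.natAdd k b) (Fin.castAdd l a) := by
  show ¬ (P.1.comp Q.1).rle (finSumFinEquiv.symm _) (finSumFinEquiv.symm _)
  rw [finSumFinEquiv_symm_apply_castAdd, finSumFinEquiv_symm_apply_natAdd]
  exact fun h => h

theorem comp_hle_ll (P : CanonPP k) (Q : CanonPP l) (a b : Fin k) :
    (P.comp Q).1.hle (Fin.castAdd l a) (Fin.castAdd l b) ↔ P.1.hle a b := by
  show (P.1.comp Q.1).hle (finSumFinEquiv.symm _) (finSumFinEquiv.symm _) ↔ _
  rw [finSumFinEquiv_symm_apply_castAdd, finSumFinEquiv_symm_apply_castAdd]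
  rfl

theorem comp_hle_rr (P : CanonPP k) (Q : CanonPP l) (a b : Fin l) :
    (P.comp Q).1.hle (Fin.natAdd k a) (Fin.natAdd k b) ↔ Q.1.hle a b := by
  show (P.1.comp Q.1).hle (finSumFinEquiv.symm _) (finSumFinEquiv.symm _) ↔ _
  rw [finSumFinEquiv_symm_apply_natAdd, finSumFinEquiv_symm_apply_natAdd]
  rfl

theorem comp_hle_lr (P : CanonPP k) (Q : CanonPP l) (a : Fin k) (b : Fin l) :
    ¬ (P.comp Q).1.hle (Fin.castAdd l a) (Fin.natAdd k b) := by
  show ¬ (P.1.comp Q.1).hle (finSumFinEquiv.symm _) (finSumFinEquiv.symm _)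
  rw [finSumFinEquiv_symm_apply_castAdd, finSumFinEquiv_symm_apply_natAdd]
  exact fun h => h

theorem comp_hle_rl (P : CanonPP k) (Q : CanonPP l) (b : Fin l) (a : Fin k) :
    ¬ (P.comp Q).1.hle (Fin.natAdd k b) (Fin.castAdd l a) := by
  show ¬ (P.1.comp Q.1).hle (finSumFinEquiv.symm _) (finSumFinEquiv.symm _)
  rw [finSumFinEquiv_symm_apply_castAdd, finSumFinEquiv_symm_apply_natAdd]
  exact fun h => h

-- cast lemmas
theorem cast_rle {a b : ℕ} (h : a = b) (P : CanonPP a) (x y : Fin b) :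
    (cast (congrArg CanonPP h) P).1.rle x y ↔
      P.1.rle (Fin.cast h.symm x) (Fin.cast h.symm y) := by
  subst h; rfl

theorem cast_hle {a b : ℕ} (h : a = b) (P : CanonPP a) (x y : Fin b) :
    (cast (congrArg CanonPP h) P).1.hle x y ↔
      P.1.hle (Fin.cast h.symm x) (Fin.cast h.symm y) := by
  subst h; rfl

theorem fin_cast_cast {a b : ℕ} (h : a = b) (h' : b = a) (x : Fin a) :
    Fin.cast h' (Fin.cast h x) = x := rfl

theorem fin_cast_ne {a b : ℕ} (h : a = b) (x y : Fin a) :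
    Fin.cast h x ≠ Fin.cast h y ↔ x ≠ y := by
  simp [Fin.ext_iff]

-- restriction
theorem restrict_hle {m : ℕ} (R : CanonPP m) (s : Finset (Fin m)) (i j : Fin s.card) :
    (R.restrict s).1.hle i j ↔
      R.1.hle ((s.orderIsoOfFin rfl i : Fin m)) ((s.orderIsoOfFin rfl j : Fin m)) :=
  Iff.rfl

theorem restrict_rle {m : ℕ} (R : CanonPP m) (s : Finset (Fin m)) (i j : Fin s.card) :
    (R.restrict s).1.rle i j ↔
      R.1.rle ((s.orderIsoOfFin rfl i : Fin m)) ((s.orderIsoOfFin rfl j : Fin m)) :=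
  Iff.rfl

-- the canonical biideal of size l
def I0 (k l : ℕ) : Finset (Fin (k + l)) := Finset.univ.filter (fun x => k ≤ (x : ℕ))

theorem mem_I0 {x : Fin (k + l)} : x ∈ I0 k l ↔ k ≤ (x : ℕ) := by
  simp [I0]

theorem mem_I0c {x : Fin (k + l)} : x ∈ (I0 k l)ᶜ ↔ (x : ℕ) < k := by
  simp [I0]

def nAemb (k l : ℕ) : Fin l ↪ Fin (k + l) :=
  ⟨Fin.natAdd k, fun a b h => by
    simpa [Fin.ext_iff] using congrArg Fin.val h⟩

def cAemb (k l : ℕ) : Fin k ↪ Fin (k + l) :=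
  ⟨Fin.castAdd l, fun a b h => by
    simpa [Fin.ext_iff] using congrArg Fin.val h⟩

@[simp] theorem nAemb_apply (b : Fin l) : nAemb k l b = Fin.natAdd k b := rfl

@[simp] theorem cAemb_apply (a : Fin k) : cAemb k l a = Fin.castAdd l a := rfl

theorem I0_map : I0 k l = Finset.univ.map (nAemb k l) := by
  ext x
  simp only [mem_I0, Finset.mem_map, Finset.mem_univ, true_and]
  constructor
  · intro h
    exact ⟨⟨(x : ℕ) - k, by have := x.isLt; omega⟩, by
      simp [nAemb_apply, Fin.ext_iff]; omega⟩
  · rintro ⟨b, rfl⟩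
    simp [nAemb_apply]

theorem I0c_map : (I0 k l)ᶜ = Finset.univ.map (cAemb k l) := by
  ext x
  simp only [mem_I0c, Finset.mem_map, Finset.mem_univ, true_and]
  constructor
  · intro h
    exact ⟨⟨(x : ℕ), h⟩, by simp [cAemb_apply, Fin.ext_iff]⟩
  · rintro ⟨b, rfl⟩
    simpa [cAemb_apply] using b.isLt

theorem I0_card : (I0 k l).card = l := by
  rw [I0_map, Finset.card_map, Finset.card_univ, Fintype.card_fin]

theorem I0c_card : ((I0 k l)ᶜ).card = k := by
  rw [I0c_map, Finset.card_map, Finset.card_univ, Fintype.card_fin]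

theorem emb1_eq (i : Fin ((I0 k l)ᶜ).card) :
    ((I0 k l)ᶜ.orderIsoOfFin rfl i : Fin (k + l)) = Fin.castAdd l (Fin.cast I0c_card i) := by
  have hu := Finset.orderEmbOfFin_unique (s := (I0 k l)ᶜ) rfl
    (f := fun i : Fin ((I0 k l)ᶜ).card => Fin.castAdd l (Fin.cast I0c_card i))
    (fun i => mem_I0c.2 (Fin.cast I0c_card i).isLt) (fun _ _ h => h)
  rw [Finset.coe_orderIsoOfFin_apply, ← hu]

theorem emb2_eq (i : Fin (I0 k l).card) :
    ((I0 k l).orderIsoOfFin rfl i : Fin (k + l)) = Fin.natAdd k (Fin.cast I0_card i) := by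
  have hu := Finset.orderEmbOfFin_unique (s := I0 k l) rfl
    (f := fun i : Fin (I0 k l).card => Fin.natAdd k (Fin.cast I0_card i))
    (fun i => mem_I0.2 (Nat.le_add_right k _)) (fun _ _ h => Nat.add_lt_add_left h k)
  rw [Finset.coe_orderIsoOfFin_apply, ← hu]

-- biideal facts
theorem I0_biideal (R : CanonPP (k + l)) : IsBiideal R (I0 k l) := by
  intro x y hx hxy
  have hle : x ≤ y := (R.2 x y).1 hxy
  rw [mem_I0] at hx ⊢
  exact le_trans hx hle

theorem biideal_card_eq {m : ℕ} (R : CanonPP m) {I J : Finset (Fin m)}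
    (hI : IsBiideal R I) (hJ : IsBiideal R J) (hc : I.card = J.card) : I = J := by
  have upI : ∀ x ∈ I, ∀ y, x ≤ y → y ∈ I := fun x hx y hxy => hI x y hx ((R.2 x y).2 hxy)
  have upJ : ∀ x ∈ J, ∀ y, x ≤ y → y ∈ J := fun x hx y hxy => hJ x y hx ((R.2 x y).2 hxy)
  by_cases hIJ : I ⊆ J
  · exact Finset.eq_of_subset_of_card_le hIJ hc.ge
  · obtain ⟨x, hxI, hxJ⟩ := Finset.not_subset.1 hIJ
    have hJI : J ⊆ I := by
      intro y hy
      rcases le_total x y with h | h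
      · exact upI x hxI y h
      · exact absurd (upJ y hy x h) hxJ
    exact (Finset.eq_of_subset_of_card_le hJI hc.le).symm

end Aux2
section Aux3

open Finset

variable {k l : ℕ}

/-- Left condition: `ι(P) ≤ R|_{first block}`. -/
def CondL (P : CanonPP k) (R : CanonPP (k + l)) : Prop :=
  ∀ a b : Fin k, R.1.hle (Fin.castAdd l a) (Fin.castAdd l b) → P.1.rle a b

/-- Right condition: `ι(Q) ≤ R|_{second block}`. -/
def CondR (Q : CanonPP l) (R : CanonPP (k + l)) : Prop :=
  ∀ a b : Fin l, R.1.hle (Fin.natAdd k a) (Fin.natAdd k b) → Q.1.rle a b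

theorem cond_comp (P : CanonPP k) (Q : CanonPP l) (R : CanonPP (k + l)) :
    PPle (CanonPP.iota (P.comp Q)) R ↔ CondL P R ∧ CondR Q R := by
  constructor
  · intro H
    constructor
    · intro a b h
      exact (comp_rle_ll P Q a b).1 (H _ _ h)
    · intro a b h
      exact (comp_rle_rr P Q a b).1 (H _ _ h)
  · rintro ⟨h1, h2⟩ x y hxy
    show (P.comp Q).1.rle x y
    rcases fin_addCases x with ⟨a, rfl⟩ | ⟨a, rfl⟩ <;>
      rcases fin_addCases y with ⟨b, rfl⟩ | ⟨b, rfl⟩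
    · exact (comp_rle_ll P Q a b).2 (h1 a b hxy)
    · exact comp_rle_lr P Q a b
    · exact absurd (hle_le R hxy) (not_nA_le_cA a b)
    · exact (comp_rle_rr P Q a b).2 (h2 a b hxy)

theorem cond_left (P : CanonPP k) (R : CanonPP (k + l)) :
    PPle (CanonPP.iota (cast (congrArg CanonPP (I0c_card (k := k) (l := l)).symm) P))
        (R.restrict (I0 k l)ᶜ) ↔ CondL P R := by
  constructor
  · intro H a b h
    have := H (Fin.cast I0c_card.symm a) (Fin.cast I0c_card.symm b) ?_
    · rw [show ((CanonPP.iota (cast (congrArg CanonPP I0c_card.symm) P)).1.hle = 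
          (cast (congrArg CanonPP I0c_card.symm) P).1.rle) from rfl] at this
      rw [cast_rle I0c_card.symm] at this
      simpa [fin_cast_cast] using this
    · rw [restrict_hle, emb1_eq, emb1_eq, fin_cast_cast, fin_cast_cast]
      exact h
  · intro H i j h
    rw [restrict_hle, emb1_eq, emb1_eq] at h
    show (cast (congrArg CanonPP I0c_card.symm) P).1.rle i j
    rw [cast_rle I0c_card.symm]
    exact H _ _ h
  
theorem cond_right (Q : CanonPP l) (R : CanonPP (k + l)) :
    PPle (CanonPP.iota (cast (congrArg CanonPP (I0_card (k := k) (l := l)).symm) Q))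
        (R.restrict (I0 k l)) ↔ CondR Q R := by
  constructor
  · intro H a b h
    have := H (Fin.cast I0_card.symm a) (Fin.cast I0_card.symm b) ?_
    · rw [show ((CanonPP.iota (cast (congrArg CanonPP I0_card.symm) Q)).1.hle = 
          (cast (congrArg CanonPP I0_card.symm) Q).1.rle) from rfl] at this
      rw [cast_rle I0_card.symm] at this
      simpa [fin_cast_cast] using this
    · rw [restrict_hle, emb2_eq, emb2_eq, fin_cast_cast, fin_cast_cast]
      exact h
  · intro H i j h
    rw [restrict_hle, emb2_eq, emb2_eq] at h
    show (cast (congrArg CanonPP I0_card.symm) Q).1.rle i j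
    rw [cast_rle I0_card.symm]
    exact H _ _ h

end Aux3
section Aux4

open Finset

variable {k l : ℕ}

noncomputable def EA1 (P : CanonPP k) (R : CanonPP (k + l)) : ℕ :=
  ∑ a : Fin k, ∑ b : Fin k,
    if (P.1.rle a b ∧ a ≠ b) ∧ (R.1.hle (Fin.castAdd l a) (Fin.castAdd l b) ∧ a ≠ b)
    then 1 else 0

noncomputable def EB1 (P : CanonPP k) (R : CanonPP (k + l)) : ℕ :=
  ∑ a : Fin k, ∑ b : Fin k,
    if (P.1.hle a b ∧ a ≠ b) ∧ (R.1.rle (Fin.castAdd l a) (Fin.castAdd l b) ∧ a ≠ b)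
    then 1 else 0

noncomputable def EA2 (Q : CanonPP l) (R : CanonPP (k + l)) : ℕ :=
  ∑ a : Fin l, ∑ b : Fin l,
    if (Q.1.rle a b ∧ a ≠ b) ∧ (R.1.hle (Fin.natAdd k a) (Fin.natAdd k b) ∧ a ≠ b)
    then 1 else 0

noncomputable def EB2 (Q : CanonPP l) (R : CanonPP (k + l)) : ℕ :=
  ∑ a : Fin l, ∑ b : Fin l,
    if (Q.1.hle a b ∧ a ≠ b) ∧ (R.1.rle (Fin.natAdd k a) (Fin.natAdd k b) ∧ a ≠ b)
    then 1 else 0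

noncomputable def EX (R : CanonPP (k + l)) : ℕ :=
  ∑ a : Fin k, ∑ b : Fin l,
    if R.1.hle (Fin.castAdd l a) (Fin.natAdd k b) then 1 else 0

theorem sum_split (f : Fin (k + l) → ℕ) :
    ∑ x, f x = ∑ a : Fin k, f (Fin.castAdd l a) + ∑ b : Fin l, f (Fin.natAdd k b) := by
  rw [← Equiv.sum_comp finSumFinEquiv f, Fintype.sum_sum_type]
  simp only [finSumFinEquiv_apply_left, finSumFinEquiv_apply_right]

theorem double_sum_split (f : Fin (k + l) → Fin (k + l) → ℕ) :
    ∑ x, ∑ y, f x y =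
      ((∑ a : Fin k, ∑ b : Fin k, f (Fin.castAdd l a) (Fin.castAdd l b)) +
        ∑ a : Fin k, ∑ b : Fin l, f (Fin.castAdd l a) (Fin.natAdd k b)) +
      ((∑ a : Fin l, ∑ b : Fin k, f (Fin.natAdd k a) (Fin.castAdd l b)) +
        ∑ a : Fin l, ∑ b : Fin l, f (Fin.natAdd k a) (Fin.natAdd k b)) := by
  rw [sum_split (fun x => ∑ y, f x y)]
  congr 1
  · rw [← Finset.sum_add_distrib]
    exact Finset.sum_congr rfl fun a _ => sum_split _
  · rw [← Finset.sum_add_distrib]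
    exact Finset.sum_congr rfl fun a _ => sum_split _

theorem phi_comp (P : CanonPP k) (Q : CanonPP l) (R : CanonPP (k + l)) :
    phi (P.comp Q) R = ((EA1 P R + EX R) + EA2 Q R) + (EB1 P R + EB2 Q R) := by
  rw [phi, Finset.card_filter, Finset.card_filter, Fintype.sum_prod_type,
    Fintype.sum_prod_type, double_sum_split, double_sum_split]
  simp only [comp_rle_ll, comp_rle_rr, comp_rle_lr, comp_rle_rl, comp_hle_ll,
    comp_hle_rr, comp_hle_lr, comp_hle_rl, cA_ne_iff, nA_ne_iff, cA_ne_nA, nA_ne_cA,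
    ne_eq, not_false_eq_true, and_true, true_and, false_and, and_false, if_true,
    if_false, Finset.sum_const_zero, add_zero, zero_add, EA1, EA2, EB1, EB2, EX]

theorem hNum_I0 (R : CanonPP (k + l)) :
    hNum R (I0 k l)ᶜ (I0 k l) = EX R := by
  rw [hNum, Finset.card_filter, Finset.sum_product, I0c_map]
  rw [Finset.sum_map]
  simp only [I0_map, Finset.sum_map, Function.Embedding.coeFn_mk, cAemb_apply, nAemb_apply,
    cA_ne_nA, ne_eq, not_false_eq_true, and_true, EX]

theorem phi_res_left (P : CanonPP k) (R : CanonPP (k + l)) :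
    phi (cast (congrArg CanonPP (I0c_card (k := k) (l := l)).symm) P)
      (R.restrict (I0 k l)ᶜ) = EA1 P R + EB1 P R := by
  have reidx : ∀ g : Fin ((I0 k l)ᶜ).card → Fin ((I0 k l)ᶜ).card → ℕ,
      (∑ i, ∑ j, g i j) =
        ∑ a : Fin k, ∑ b : Fin k,
          g (Fin.cast I0c_card.symm a) (Fin.cast I0c_card.symm b) := by
    intro g
    rw [← Equiv.sum_comp (finCongr (I0c_card (k := k) (l := l)).symm)
      (fun i => ∑ j, g i j)]
    refine Finset.sum_congr rfl fun a _ => ?_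
    rw [← Equiv.sum_comp (finCongr (I0c_card (k := k) (l := l)).symm) (fun j => g _ j)]
    simp only [finCongr_apply]
  rw [phi, Finset.card_filter, Finset.card_filter, Fintype.sum_prod_type,
    Fintype.sum_prod_type, reidx, reidx]
  simp only [cast_rle I0c_card.symm, cast_hle I0c_card.symm, restrict_hle, restrict_rle,
    emb1_eq, fin_cast_cast, fin_cast_ne, EA1, EB1]

theorem phi_res_right (Q : CanonPP l) (R : CanonPP (k + l)) :
    phi (cast (congrArg CanonPP (I0_card (k := k) (l := l)).symm) Q)
      (R.restrict (I0 k l)) = EA2 Q R + EB2 Q R := by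
  have reidx : ∀ g : Fin (I0 k l).card → Fin (I0 k l).card → ℕ,
      (∑ i, ∑ j, g i j) =
        ∑ a : Fin l, ∑ b : Fin l,
          g (Fin.cast I0_card.symm a) (Fin.cast I0_card.symm b) := by
    intro g
    rw [← Equiv.sum_comp (finCongr (I0_card (k := k) (l := l)).symm)
      (fun i => ∑ j, g i j)]
    refine Finset.sum_congr rfl fun a _ => ?_
    rw [← Equiv.sum_comp (finCongr (I0_card (k := k) (l := l)).symm) (fun j => g _ j)]
    simp only [finCongr_apply]
  rw [phi, Finset.card_filter, Finset.card_filter, Fintype.sum_prod_type,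
    Fintype.sum_prod_type, reidx, reidx]
  simp only [cast_rle I0_card.symm, cast_hle I0_card.symm, restrict_hle, restrict_rle,
    emb2_eq, fin_cast_cast, fin_cast_ne, EA2, EB2]

theorem phi_split (P : CanonPP k) (Q : CanonPP l) (R : CanonPP (k + l)) :
    phi (P.comp Q) R = hNum R (I0 k l)ᶜ (I0 k l) +
      (phi (cast (congrArg CanonPP (I0c_card (k := k) (l := l)).symm) P)
          (R.restrict (I0 k l)ᶜ) +
        phi (cast (congrArg CanonPP (I0_card (k := k) (l := l)).symm) Q)
          (R.restrict (I0 k l))) := by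
  rw [phi_comp, phi_res_left, phi_res_right, hNum_I0]
  ring

end Aux4
section Aux5

open Finset

variable (K : Type) [Field K] (q : K)

theorem core {k l : ℕ} (P : CanonPP k) (Q : CanonPP l) (R : CanonPP (k + l)) :
    pairN K q (P.comp Q) R = q ^ hNum R (I0 k l)ᶜ (I0 k l) *
      (pairPP K q ⟨k, P⟩ ⟨((I0 k l)ᶜ).card, R.restrict (I0 k l)ᶜ⟩ *
       pairPP K q ⟨l, Q⟩ ⟨(I0 k l).card, R.restrict (I0 k l)⟩) := by
  rw [pairPP_cast K q (I0c_card (k := k) (l := l)).symm,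
    pairPP_cast K q (I0_card (k := k) (l := l)).symm]
  simp only [pairN]
  by_cases h1 : CondL P R
  · by_cases h2 : CondR Q R
    · rw [if_pos ((cond_comp P Q R).2 ⟨h1, h2⟩), if_pos ((cond_left P R).2 h1),
        if_pos ((cond_right Q R).2 h2), phi_split, pow_add, pow_add]
    · rw [if_neg (fun hc => h2 ((cond_comp P Q R).1 hc).2),
        if_neg (fun hc => h2 ((cond_right Q R).1 hc)), mul_zero, mul_zero]
  · rw [if_neg (fun hc => h1 ((cond_comp P Q R).1 hc).1),
      if_neg (fun hc => h1 ((cond_left P R).1 hc)), zero_mul, mul_zero]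

theorem hopf_part (k l m : ℕ) (P : CanonPP k) (Q : CanonPP l) (R : CanonPP m) :
    pairPP K q (⟨k + l, P.comp Q⟩ : PPS) (⟨m, R⟩ : PPS) =
      ∑ I ∈ Finset.univ.filter (fun I : Finset (Fin m) => IsBiideal R I),
        q ^ hNum R Iᶜ I *
          (pairPP K q (⟨k, P⟩ : PPS) (⟨Iᶜ.card, R.restrict Iᶜ⟩ : PPS) *
            pairPP K q (⟨l, Q⟩ : PPS) (⟨I.card, R.restrict I⟩ : PPS)) := by
  by_cases hm : k + l = m
  · subst hm
    rw [pairPP_mk]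
    rw [Finset.sum_eq_single (I0 k l)]
    · exact core K q P Q R
    · intro I hI hne
      have hbi : IsBiideal R I := (Finset.mem_filter.1 hI).2
      have hcard : I.card ≠ l := by
        intro hc
        exact hne (biideal_card_eq R hbi (I0_biideal R) (hc.trans I0_card.symm))
      rw [pairPP_ne K q (fun h => hcard h.symm), mul_zero, mul_zero]
    · intro h
      exact absurd (Finset.mem_filter.2 ⟨Finset.mem_univ _, I0_biideal R⟩) h
  · rw [pairPP_ne K q hm]
    symm
    apply Finset.sum_eq_zero
    intro I hI
    have hcard : I.card + Iᶜ.card = m := by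
      rw [Finset.card_add_card_compl, Fintype.card_fin]
    by_cases h1 : k = Iᶜ.card
    · have h2 : l ≠ I.card := fun h => hm (by omega)
      rw [pairPP_ne K q h2, mul_zero, mul_zero]
    · rw [pairPP_ne K q h1, zero_mul, mul_zero]

end Aux5

/-- The pairing `⟨−,−⟩_q` is symmetric, and satisfies the Hopf
compatibility with the composition product and the coproduct `Δ_q`:
`⟨PQ, R⟩_q = Σ_{I biideal of R} q^{h_{R∖I}^I} ⟨P, R∖I⟩_q ⟨Q, I⟩_q`. -/
theorem statement15 (K : Type) [Field K] (q : K) :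
    (∀ P Q : PPS, pairPP K q P Q = pairPP K q Q P) ∧
    (∀ (k l m : ℕ) (P : CanonPP k) (Q : CanonPP l) (R : CanonPP m),
      pairPP K q (⟨k + l, P.comp Q⟩ : PPS) (⟨m, R⟩ : PPS) =
        ∑ I ∈ Finset.univ.filter (fun I : Finset (Fin m) => IsBiideal R I),
          q ^ hNum R Iᶜ I *
            (pairPP K q (⟨k, P⟩ : PPS) (⟨Iᶜ.card, R.restrict Iᶜ⟩ : PPS) *
              pairPP K q (⟨l, Q⟩ : PPS) (⟨I.card, R.restrict I⟩ : PPS))) := by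
  exact ⟨pair_symm K q, hopf_part K q⟩
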